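/- Let X be a topological space and let A be a subalgebra of the algebra of bounded continuous real-valued functions on X which contains the constant functions, separates the points of X, and separates points from closed sets. Let (X̊, ι) be a compactification of X such that every f ∈ A has a continuous extension f̊ : X̊ → ℝ with f̊ ∘ ι = f and such that {f̊ : f ∈ A} is dense in C(X̊, ℝ). Let I : A → ℝ be linear with I(1) = 1, |I(f)| ≤ sup_X |f| and I(f) ≥ 0 for f ≥ 0, and let μ̊ be a regular Borel probability measure on X̊ with ∫ f̊ dμ̊ = I(f) for all f ∈ A. Suppose g : X → X is a homeomorphism such that f ∘ g ∈ A and f ∘ g⁻¹ ∈ A for every f ∈ A, and that I(f ∘ g) = I(f) for every f ∈ A. Then there is a unique homeomorphism ĝ : X̊ → X̊ with ĝ ∘ ι = ι ∘ g, and the pushforward of μ̊ under ĝ equals μ̊. -/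

import Mathlib

open MeasureTheory

set_option synthInstance.maxHeartbeats 1000000
set_option maxHeartbeats 1000000

theorem aux_integrable {K : Type*} [TopologicalSpace K] [CompactSpace K]
    [MeasurableSpace K] [OpensMeasurableSpace K] (μ : Measure K) [IsFiniteMeasure μ]
    {F : K → ℝ} (hF : Continuous F) : Integrable F μ :=
  hF.integrable_of_hasCompactSupport
    (IsCompact.of_isClosed_subset isCompact_univ (isClosed_tsupport F) (Set.subset_univ _))

theorem aux_le {K : Type*} [TopologicalSpace K] [CompactSpace K] [T2Space K]
    [MeasurableSpace K] [BorelSpace K] (μ ν : Measure K) [IsFiniteMeasure μ] [IsFiniteMeasure ν]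
    (hν : ν.Regular)
    (h : ∀ F : K → ℝ, Continuous F → ∫ z, F z ∂μ = ∫ z, F z ∂ν)
    {C : Set K} (hC : IsClosed C) : μ C ≤ ν C := by
  haveI := hν
  by_contra hlt
  push_neg at hlt
  obtain ⟨U, hCU, hUopen, hU⟩ := Set.exists_isOpen_lt_of_lt (μ := ν) C _ hlt
  obtain ⟨f, hf0, hf1, hf01⟩ := exists_continuous_zero_one_of_isClosed
    hUopen.isClosed_compl hC (Set.disjoint_left.2 fun x hx hx' => hx (hCU hx'))
  have hμC : (μ C).toReal ≤ ∫ z, f z ∂μ := by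
    rw [← Measure.real_def, ← integral_indicator_one hC.measurableSet]
    refine integral_mono ((integrable_const (1:ℝ)).indicator hC.measurableSet)
      (aux_integrable μ f.continuous) ?_
    intro x
    by_cases hx : x ∈ C
    · simp only [Set.indicator_of_mem hx]
      exact ge_of_eq (by simpa using hf1 hx)
    · simpa [Set.indicator_of_notMem hx] using (hf01 x).1
  have hνU : ∫ z, f z ∂ν ≤ (ν U).toReal := by
    rw [← Measure.real_def, ← integral_indicator_one hUopen.measurableSet]
    refine integral_mono (aux_integrable ν f.continuous)
      ((integrable_const (1:ℝ)).indicator hUopen.measurableSet) ?_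
    intro x
    by_cases hx : x ∈ U
    · simpa [Set.indicator_of_mem hx] using (hf01 x).2
    · simp only [Set.indicator_of_notMem hx]
      exact le_of_eq (by simpa using hf0 hx)
  have hle : μ C ≤ ν U := by
    refine (ENNReal.toReal_le_toReal (measure_ne_top μ C) (measure_ne_top ν U)).mp ?_
    calc (μ C).toReal ≤ ∫ z, f z ∂μ := hμC
      _ = ∫ z, f z ∂ν := h f f.continuous
      _ ≤ (ν U).toReal := hνU
  exact lt_irrefl _ (hU.trans_le hle)

theorem aux_ext {K : Type*} [TopologicalSpace K] [CompactSpace K] [T2Space K]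
    [MeasurableSpace K] [BorelSpace K] (μ ν : Measure K) [IsFiniteMeasure μ] [IsFiniteMeasure ν]
    (hμ : μ.Regular) (hν : ν.Regular)
    (h : ∀ F : K → ℝ, Continuous F → ∫ z, F z ∂μ = ∫ z, F z ∂ν) : μ = ν := by
  haveI := hμ; haveI := hν
  have hclosed : ∀ C : Set K, IsClosed C → μ C = ν C := fun C hC =>
    le_antisymm (aux_le μ ν hν h hC) (aux_le ν μ hμ (fun F hF => (h F hF).symm) hC)
  have hopen : ∀ U : Set K, IsOpen U → μ U = ν U := by
    intro U hU
    rw [hμ.innerRegular.measure_eq_iSup hU, hν.innerRegular.measure_eq_iSup hU]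
    exact iSup_congr fun s => iSup_congr fun hsU => iSup_congr fun hs => hclosed s hs.isClosed
  ext s hs
  rw [Set.measure_eq_iInf_isOpen s μ, Set.measure_eq_iInf_isOpen s ν]
  exact iInf_congr fun U => iInf_congr fun hsU => iInf_congr fun hU => hopen U hU

/-- In the setting of the previous statements — `A` a subalgebra of bounded
continuous functions on `X` separating points and separating points from closed sets,
`(K, ι)` a compactification of `X` on which all `f ∈ A` extend continuously with extensions
dense in `C(K, ℝ)`, `I` a normalized positive linear functional on `A` bounded by the sup
norm, and `μ` a regular Borel probability measure on `K` integrating the extensions to `I` —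
if `g : X → X` is a homeomorphism with `f ∘ g ∈ A` and `f ∘ g⁻¹ ∈ A` for all `f ∈ A` and
`I (f ∘ g) = I f`, then there is a unique homeomorphism `gK` of `K` with `gK ∘ ι = ι ∘ g`,
and the pushforward of `μ` under `gK` equals `μ`. -/
theorem stmt_4 {X : Type u} [TopologicalSpace X]
    (A : Subalgebra ℝ (BoundedContinuousFunction X ℝ))
    (hsepPts : ∀ x y : X, x ≠ y → ∃ f ∈ A, f x ≠ f y)
    (hsepClosed : ∀ C : Set X, IsClosed C → ∀ x ∉ C,
      ∃ f ∈ A, f x = 1 ∧ ∀ y ∈ C, f y = 0)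
    {K : Type v} [TopologicalSpace K] [CompactSpace K] [T2Space K]
    [MeasurableSpace K] [BorelSpace K]
    (ι : X → K) (hemb : Topology.IsEmbedding ι) (hdense : DenseRange ι)
    (hext : ∀ f ∈ A, ∃ F : K → ℝ, Continuous F ∧ ∀ x, F (ι x) = f x)
    (hextdense : ∀ G : K → ℝ, Continuous G → ∀ ε > 0, ∃ f ∈ A, ∃ F : K → ℝ,
      Continuous F ∧ (∀ x, F (ι x) = f x) ∧ ∀ z, |F z - G z| ≤ ε)
    (I : A →ₗ[ℝ] ℝ)
    (hI1 : I 1 = 1)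
    (hIbd : ∀ f : A, |I f| ≤ ‖(f : BoundedContinuousFunction X ℝ)‖)
    (hIpos : ∀ f : A, (∀ x, 0 ≤ (f : BoundedContinuousFunction X ℝ) x) → 0 ≤ I f)
    (μ : Measure K) (hprob : IsProbabilityMeasure μ) (hreg : μ.Regular)
    (hμI : ∀ (f : A) (F : K → ℝ), Continuous F →
      (∀ x, F (ι x) = (f : BoundedContinuousFunction X ℝ) x) → ∫ z, F z ∂μ = I f)
    (g : X ≃ₜ X)
    (hgA : ∀ f : A,
      (f : BoundedContinuousFunction X ℝ).compContinuous (g : C(X, X)) ∈ A)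
    (hgA' : ∀ f : A,
      (f : BoundedContinuousFunction X ℝ).compContinuous (g.symm : C(X, X)) ∈ A)
    (hIg : ∀ (f : A)
      (hf : (f : BoundedContinuousFunction X ℝ).compContinuous (g : C(X, X)) ∈ A),
      I ⟨(f : BoundedContinuousFunction X ℝ).compContinuous (g : C(X, X)), hf⟩ = I f) :
    (∃! gK : K ≃ₜ K, ∀ x, gK (ι x) = ι (g x)) ∧
      ∀ gK : K ≃ₜ K, (∀ x, gK (ι x) = ι (g x)) → Measure.map gK μ = μ := by
  classical
  haveI := hprob
  haveI := hreg
  -- unique continuous extension from the dense image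
  have huniqR : ∀ (F F' : K → ℝ), Continuous F → Continuous F' →
      (∀ x, F (ι x) = F' (ι x)) → F = F' := fun F F' hF hF' hFF' =>
    hF.ext_on hdense hF' (by rintro _ ⟨x, rfl⟩; exact hFF' x)
  have huniqK : ∀ (F F' : K → K), Continuous F → Continuous F' →
      (∀ x, F (ι x) = F' (ι x)) → F = F' := fun F F' hF hF' hFF' =>
    hF.ext_on hdense hF' (by rintro _ ⟨x, rfl⟩; exact hFF' x)
  -- canonical extensions
  let Ext : A → K → ℝ := fun f => (hext f f.2).choose
  have hExtC : ∀ f : A, Continuous (Ext f) := fun f => (hext f f.2).choose_spec.1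
  have hExtι : ∀ (f : A) (x : X), Ext f (ι x) = (f : BoundedContinuousFunction X ℝ) x :=
    fun f => (hext f f.2).choose_spec.2
  -- extensions approximate all continuous functions
  have happrox : ∀ (G : K → ℝ), Continuous G → ∀ ε > (0:ℝ),
      ∃ f : A, ∀ z, |Ext f z - G z| ≤ ε := by
    intro G hG ε hε
    obtain ⟨f, hfA, F, hFc, hFι, hFG⟩ := hextdense G hG ε hε
    refine ⟨⟨f, hfA⟩, ?_⟩
    have hE : Ext ⟨f, hfA⟩ = F :=
      huniqR _ _ (hExtC _) hFc (fun x => (hExtι ⟨f, hfA⟩ x).trans (hFι x).symm)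
    rw [hE]; exact hFG
  -- extensions separate points of K
  have hsepK : ∀ z w : K, (∀ f : A, Ext f z = Ext f w) → z = w := by
    intro z w hzw
    by_contra hne
    obtain ⟨G, hG0, hG1, -⟩ := exists_continuous_zero_one_of_isClosed
      (isClosed_singleton (x := z)) (isClosed_singleton (x := w))
      (Set.disjoint_singleton.2 hne)
    have hsame : G z = G w := by
      have h2 : ∀ ε > (0:ℝ), |G z - G w| ≤ 2 * ε := by
        intro ε hε
        obtain ⟨f, hf⟩ := happrox G G.continuous ε hε
        calc |G z - G w| = |(G z - Ext f z) + (Ext f w - G w)| := by rw [hzw f]; ring_nf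
          _ ≤ |G z - Ext f z| + |Ext f w - G w| := abs_add_le _ _
          _ ≤ ε + ε := add_le_add (by rw [abs_sub_comm]; exact hf z) (hf w)
          _ = 2 * ε := by ring
      have h0 : |G z - G w| ≤ 0 := by
        refine le_of_forall_pos_le_add fun ε hε => ?_
        have := h2 (ε / 2) (by linarith); linarith
      have := le_antisymm h0 (abs_nonneg _)
      have := abs_eq_zero.1 this
      linarith [sub_eq_zero.1 this]
    have : (0:ℝ) = 1 := by
      have hz : G z = 0 := by simpa using hG0 (Set.mem_singleton z)
      have hw : G w = 1 := by simpa using hG1 (Set.mem_singleton w)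
      rw [← hz, hsame, hw]
    norm_num at this
  -- the embedding of K into a product
  let e : K → (A → ℝ) := fun z f => Ext f z
  have heC : Continuous e := continuous_pi fun f => hExtC f
  have heInj : Function.Injective e := fun z w h => hsepK z w fun f => congrFun h f
  have hecl : Topology.IsClosedEmbedding e := heC.isClosedEmbedding heInj
  -- extend any compatible homeomorphism of X to a continuous map on K
  have main : ∀ (h : X ≃ₜ X),
      (∀ f : A, (f : BoundedContinuousFunction X ℝ).compContinuous (h : C(X, X)) ∈ A) →
      ∃ H : K → K, Continuous H ∧ ∀ x, H (ι x) = ι (h x) := by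
    intro h hhA
    let T : K → (A → ℝ) := fun z f =>
      Ext ⟨(f : BoundedContinuousFunction X ℝ).compContinuous (h : C(X, X)), hhA f⟩ z
    have hTC : Continuous T := continuous_pi fun f => hExtC _
    have hTι : ∀ x, T (ι x) = e (ι (h x)) := by
      intro x
      funext f
      show Ext _ (ι x) = Ext f (ι (h x))
      rw [hExtι, hExtι]
      simp
    have hrangecl : IsClosed (T ⁻¹' Set.range e) := hecl.isClosed_range.preimage hTC
    have hsub : Set.range ι ⊆ T ⁻¹' Set.range e := by
      rintro _ ⟨x, rfl⟩; exact ⟨ι (h x), (hTι x).symm⟩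
    have hrange : ∀ z, T z ∈ Set.range e := by
      have huniv : Set.univ ⊆ T ⁻¹' Set.range e := by
        rw [← hdense.closure_range]
        exact hrangecl.closure_subset_iff.2 hsub
      exact fun z => huniv (Set.mem_univ z)
    choose H hH using hrange
    have hHC : Continuous H := by
      rw [hecl.toIsEmbedding.continuous_iff]
      have : e ∘ H = T := funext fun z => hH z
      rw [this]; exact hTC
    exact ⟨H, hHC, fun x => heInj ((hH (ι x)).trans (hTι x))⟩
  obtain ⟨H, hHC, hHι⟩ := main g hgA
  obtain ⟨H', hH'C, hH'ι⟩ := main g.symm hgA'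
  have hHH' : H ∘ H' = id :=
    huniqK _ _ (hHC.comp hH'C) continuous_id
      (fun x => by simp [Function.comp_apply, hH'ι, hHι])
  have hH'H : H' ∘ H = id :=
    huniqK _ _ (hH'C.comp hHC) continuous_id
      (fun x => by simp [Function.comp_apply, hH'ι, hHι])
  let gK : K ≃ₜ K :=
    { toFun := H, invFun := H',
      left_inv := fun z => congrFun hH'H z,
      right_inv := fun z => congrFun hHH' z,
      continuous_toFun := hHC, continuous_invFun := hH'C }
  have hgKι : ∀ x, gK (ι x) = ι (g x) := hHι
  have huniqgK : ∀ gK' : K ≃ₜ K, (∀ x, gK' (ι x) = ι (g x)) → gK' = gK := by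
    intro gK' hgK'
    have hfun : (gK' : K → K) = H :=
      huniqK _ _ gK'.continuous hHC fun x => (hgK' x).trans (hHι x).symm
    exact Homeomorph.ext fun z => congrFun hfun z
  have hmeas : ∀ gK' : K ≃ₜ K, (∀ x, gK' (ι x) = ι (g x)) → Measure.map gK' μ = μ := by
    intro gK' hgK'
    have hregmap : (Measure.map (gK' : K → K) μ).Regular := Measure.Regular.map gK'
    haveI : IsProbabilityMeasure (Measure.map (gK' : K → K) μ) :=
      Measure.isProbabilityMeasure_map gK'.continuous.measurable.aemeasurable
    refine aux_ext _ _ hregmap hreg ?_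
    intro F hF
    rw [integral_map gK'.continuous.measurable.aemeasurable hF.aestronglyMeasurable]
    have key : ∀ f : A, ∫ z, Ext f (gK' z) ∂μ = ∫ z, Ext f z ∂μ := by
      intro f
      have h1 : ∫ z, Ext f (gK' z) ∂μ = I ⟨_, hgA f⟩ :=
        hμI ⟨_, hgA f⟩ (fun z => Ext f (gK' z)) ((hExtC f).comp gK'.continuous)
          (fun x => by show Ext f (gK' (ι x)) = _; rw [hgK' x, hExtι]; simp)
      rw [h1, hIg f (hgA f), ← hμI f (Ext f) (hExtC f) (hExtι f)]
    have hμ1 : (μ Set.univ).toReal = 1 := by simp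
    have habs : ∀ ε > (0:ℝ), |∫ z, F (gK' z) ∂μ - ∫ z, F z ∂μ| ≤ 2 * ε := by
      intro ε hε
      obtain ⟨f, hf⟩ := happrox F hF ε hε
      have e1 : |∫ z, F (gK' z) ∂μ - ∫ z, Ext f (gK' z) ∂μ| ≤ ε := by
        rw [← integral_sub
          (aux_integrable μ (hF.comp gK'.continuous) : Integrable (fun z => F (gK' z)) μ)
          (aux_integrable μ ((hExtC f).comp gK'.continuous) :
            Integrable (fun z => Ext f (gK' z)) μ)]
        have hb : ∀ z, ‖F (gK' z) - Ext f (gK' z)‖ ≤ ε := fun z => by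
          rw [Real.norm_eq_abs, abs_sub_comm]; exact hf (gK' z)
        calc |∫ z, (F (gK' z) - Ext f (gK' z)) ∂μ| ≤ ε * (μ Set.univ).toReal :=
              norm_integral_le_of_norm_le_const (ae_of_all μ hb)
          _ = ε := by rw [hμ1, mul_one]
      have e2 : |∫ z, Ext f z ∂μ - ∫ z, F z ∂μ| ≤ ε := by
        rw [← integral_sub (aux_integrable μ (hExtC f)) (aux_integrable μ hF)]
        have hb : ∀ z, ‖Ext f z - F z‖ ≤ ε := fun z => by
          rw [Real.norm_eq_abs]; exact hf z
        calc |∫ z, (Ext f z - F z) ∂μ| ≤ ε * (μ Set.univ).toReal :=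
              norm_integral_le_of_norm_le_const (ae_of_all μ hb)
          _ = ε := by rw [hμ1, mul_one]
      calc |∫ z, F (gK' z) ∂μ - ∫ z, F z ∂μ|
          = |(∫ z, F (gK' z) ∂μ - ∫ z, Ext f (gK' z) ∂μ) +
              (∫ z, Ext f z ∂μ - ∫ z, F z ∂μ)| := by rw [← key f]; ring_nf
        _ ≤ |∫ z, F (gK' z) ∂μ - ∫ z, Ext f (gK' z) ∂μ| +
              |∫ z, Ext f z ∂μ - ∫ z, F z ∂μ| := abs_add_le _ _
        _ ≤ ε + ε := add_le_add e1 e2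
        _ = 2 * ε := by ring
    have h0 : |∫ z, F (gK' z) ∂μ - ∫ z, F z ∂μ| ≤ 0 := by
      refine le_of_forall_pos_le_add fun ε hε => ?_
      have := habs (ε / 2) (by linarith); linarith
    have := abs_eq_zero.1 (le_antisymm h0 (abs_nonneg _))
    linarith [sub_eq_zero.1 this]
  exact ⟨⟨gK, hgKι, huniqgK⟩, hmeas⟩
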